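/- Suppose ω : (0,∞) → ℂ is defined by ω(t) = exp(p(t/2)) where (q,p) solve q' = ∂H_B/∂p, p' = -∂H_B/∂q with H_B(q,p,t) = -4iq + (4/t)q²sinh²(p/2), with q nonvanishing. Then ω satisfies the Painlevé V equation ω'' = (ω')²·(3ω-1)/(2ω(ω-1)) + 2ω(ω+1)/(ω-1) + 2iω/t - ω'/t. -/

import Mathlib

set_option maxHeartbeats 1600000


/-- if `(q,p)` solve the bulk Hamiltonian system
`q_t = (4/t)q² sinh(p/2)cosh(p/2)`, `p_t = 4i - (8/t)q sinh²(p/2)` (for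
`H_B(q,p,t) = -4iq + (4/t)q² sinh²(p/2)`), with `q` nonvanishing, then
`ω(t) = exp(p(t/2))` satisfies the Painlevé V equation
`ω'' = (ω')²(3ω-1)/(2ω(ω-1)) + 2ω(ω+1)/(ω-1) + 2iω/t - ω'/t`. -/
theorem omega_satisfies_painleveV
    (q p : ℝ → ℂ)
    (hq : ∀ t : ℝ, 0 < t → HasDerivAt q
      ((4 / (t : ℂ)) * (q t) ^ 2 * Complex.sinh (p t / 2) * Complex.cosh (p t / 2)) t)
    (hp : ∀ t : ℝ, 0 < t → HasDerivAt p
      (4 * Complex.I - (8 / (t : ℂ)) * q t * (Complex.sinh (p t / 2)) ^ 2) t)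
    (hp2 : ∀ t : ℝ, 0 < t → DifferentiableAt ℝ (deriv p) t)
    (hq0 : ∀ t : ℝ, 0 < t → q t ≠ 0)
    (hω1 : ∀ t : ℝ, 0 < t → Complex.exp (p (t / 2)) ≠ 1) :
    ∀ t : ℝ, 0 < t →
      deriv (deriv (fun τ : ℝ => Complex.exp (p (τ / 2)))) t
        = (deriv (fun τ : ℝ => Complex.exp (p (τ / 2))) t) ^ 2
            * (3 * Complex.exp (p (t / 2)) - 1)
            / (2 * Complex.exp (p (t / 2)) * (Complex.exp (p (t / 2)) - 1))
          + 2 * Complex.exp (p (t / 2)) * (Complex.exp (p (t / 2)) + 1)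
            / (Complex.exp (p (t / 2)) - 1)
          + 2 * Complex.I * Complex.exp (p (t / 2)) / (t : ℂ)
          - deriv (fun τ : ℝ => Complex.exp (p (τ / 2))) t / (t : ℂ) := by
  -- derivative of τ ↦ p (τ/2)
  have hpc : ∀ τ : ℝ, 0 < τ → HasDerivAt (fun σ : ℝ => p (σ / 2))
      ((4 * Complex.I - 16 * ((τ : ℂ))⁻¹ * q (τ / 2) * Complex.sinh (p (τ / 2) / 2) ^ 2) / 2) τ := by
    intro τ hτ
    have hτ2 : (0 : ℝ) < τ / 2 := by linarith
    have h := (hp (τ / 2) hτ2).scomp τ ((hasDerivAt_id τ).div_const 2)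
    convert h using 1
    · rfl
    · rfl
    have hτ0 : ((τ : ℂ)) ≠ 0 := by exact_mod_cast hτ.ne'
    simp [Complex.real_smul]
    push_cast
    field_simp
    ring
  -- derivative of τ ↦ q (τ/2)
  have hqc : ∀ τ : ℝ, 0 < τ → HasDerivAt (fun σ : ℝ => q (σ / 2))
      ((8 * ((τ : ℂ))⁻¹ * (q (τ / 2)) ^ 2 * Complex.sinh (p (τ / 2) / 2)
        * Complex.cosh (p (τ / 2) / 2)) / 2) τ := by
    intro τ hτ
    have hτ2 : (0 : ℝ) < τ / 2 := by linarith
    have h := (hq (τ / 2) hτ2).scomp τ ((hasDerivAt_id τ).div_const 2)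
    convert h using 1
    · rfl
    · rfl
    have hτ0 : ((τ : ℂ)) ≠ 0 := by exact_mod_cast hτ.ne'
    simp [Complex.real_smul]
    push_cast
    field_simp
    ring
  -- derivative of ω
  have key : ∀ τ : ℝ, 0 < τ → HasDerivAt (fun σ : ℝ => Complex.exp (p (σ / 2)))
      (Complex.exp (p (τ / 2)) *
        ((4 * Complex.I - 16 * ((τ : ℂ))⁻¹ * q (τ / 2) * Complex.sinh (p (τ / 2) / 2) ^ 2) / 2)) τ :=
    fun τ hτ => (hpc τ hτ).cexp
  intro t ht
  have htc : ((t : ℂ)) ≠ 0 := by exact_mod_cast ht.ne'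
  -- sinh of p(τ/2)/2
  have hsinh : HasDerivAt (fun τ : ℝ => Complex.sinh (p (τ / 2) / 2))
      (Complex.cosh (p (t / 2) / 2) *
        ((4 * Complex.I - 16 * ((t : ℂ))⁻¹ * q (t / 2) * Complex.sinh (p (t / 2) / 2) ^ 2) / 2 / 2)) t := by
    have h := (Complex.hasDerivAt_sinh (p (t / 2) / 2)).scomp t ((hpc t ht).div_const 2)
    rw [smul_eq_mul, mul_comm] at h
    exact h
  have hcinv : HasDerivAt (fun τ : ℝ => ((τ : ℂ))⁻¹) (-(((t : ℂ)) ^ 2)⁻¹) t := by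
    have h1 : HasDerivAt (fun τ : ℝ => ((τ : ℂ))) 1 t := by
      exact Complex.ofRealCLM.hasDerivAt
    have h2 := (hasDerivAt_inv (x := (t : ℂ)) htc).scomp t h1
    rw [one_smul] at h2
    exact h2
  -- second factor G = 4I - 16 τ⁻¹ q sinh²
  have hsq := hsinh.mul hsinh
  rw [show ((fun τ : ℝ => Complex.sinh (p (τ / 2) / 2)) * (fun τ : ℝ => Complex.sinh (p (τ / 2) / 2)))
      = (fun τ : ℝ => Complex.sinh (p (τ / 2) / 2) ^ 2) from funext fun τ => (pow_two _).symm] at hsq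
  have hA := ((hcinv.const_mul (16 : ℂ)).mul (hqc t ht)).mul hsq
  have hG := (hasDerivAt_const t ((4 : ℂ) * Complex.I)).sub hA
  have hF := ((hpc t ht).cexp).mul (hG.div_const 2)
  simp only [Pi.mul_def, Pi.sub_def] at hF
  -- identify deriv (deriv ω) and deriv ω
  have hev : (deriv fun τ : ℝ => Complex.exp (p (τ / 2))) =ᶠ[nhds t]
      (fun τ : ℝ => Complex.exp (p (τ / 2)) *
        ((4 * Complex.I - 16 * ((τ : ℂ))⁻¹ * q (τ / 2) * Complex.sinh (p (τ / 2) / 2) ^ 2) / 2)) := by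
    filter_upwards [eventually_gt_nhds ht] with τ hτ
    exact (key τ hτ).deriv
  rw [hev.deriv_eq, hF.deriv, (key t ht).deriv]
  -- now purely algebraic
  set e := Complex.exp (p (t / 2) / 2) with he_def
  have hE : Complex.exp (p (t / 2)) = e * e := by
    rw [he_def, ← Complex.exp_add]; ring_nf
  have he : e ≠ 0 := Complex.exp_ne_zero _
  have h1 : e * e - 1 ≠ 0 := sub_ne_zero.mpr (by rw [← hE]; exact hω1 t ht)
  have h3 : e * e⁻¹ = 1 := mul_inv_cancel₀ he
  have h2e : (2 : ℂ) * e ≠ 0 := mul_ne_zero two_ne_zero he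
  have hS : Complex.sinh (p (t / 2) / 2) = (e * e - 1) / (2 * e) := by
    rw [eq_div_iff h2e]
    have h4 := Complex.two_sinh (p (t / 2) / 2)
    rw [Complex.exp_neg, ← he_def] at h4
    linear_combination e * h4 - h3
  have hC : Complex.cosh (p (t / 2) / 2) = (e * e + 1) / (2 * e) := by
    rw [eq_div_iff h2e]
    have h4 := Complex.two_cosh (p (t / 2) / 2)
    rw [Complex.exp_neg, ← he_def] at h4
    linear_combination e * h4 + h3
  rw [hE, hS, hC]
  clear_value e
  clear hev hF hG hA hsq hsinh key hqc hpc hω1 hq0 hp2 hp hq hE hS hC hcinv h3 h2e he_def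
  revert he h1 htc
  generalize q (t / 2) = Q
  generalize (t : ℂ) = T
  intro he h1 htc
  have hf : e * e⁻¹ = 1 := mul_inv_cancel₀ h1
  have hw : (e * e - 1) * (e * e - 1)⁻¹ = 1 := mul_inv_cancel₀ htc
  have hI : Complex.I ^ 2 = -1 := Complex.I_sq
  simp only [div_eq_mul_inv, mul_inv, ← inv_pow]
  linear_combination ((-4 : ℂ) * T⁻¹ * Q * Complex.I + (-4 : ℂ) * T⁻¹ * (e * e - 1)⁻¹ * Q * Complex.I + (-12 : ℂ) * T⁻¹ ^ 2 * Q ^ 2 + (-12 : ℂ) * T⁻¹ ^ 2 * (e * e - 1)⁻¹ * Q ^ 2 + (2 : ℂ) * e⁻¹ ^ 2 * T⁻¹ ^ 2 * Q ^ 2 + (2 : ℂ) * e⁻¹ ^ 2 * T⁻¹ ^ 2 * (e * e - 1)⁻¹ * Q ^ 2 + (-4 : ℂ) * e * e⁻¹ * T⁻¹ * Q * Complex.I + (-4 : ℂ) * e * e⁻¹ * T⁻¹ * (e * e - 1)⁻¹ * Q * Complex.I + (-12 : ℂ) * e * e⁻¹ * T⁻¹ ^ 2 * Q ^ 2 + (-12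 : ℂ) * e * e⁻¹ * T⁻¹ ^ 2 * (e * e - 1)⁻¹ * Q ^ 2 + (2 : ℂ) * e * e⁻¹ ^ 3 * T⁻¹ ^ 2 * Q ^ 2 + (2 : ℂ) * e * e⁻¹ ^ 3 * T⁻¹ ^ 2 * (e * e - 1)⁻¹ * Q ^ 2 + (-2 : ℂ) * e ^ 2 * (e * e - 1)⁻¹ + (16 : ℂ) * e ^ 2 * T⁻¹ * Q * Complex.I + (20 : ℂ) * e ^ 2 * T⁻¹ * (e * e - 1)⁻¹ * Q * Complex.I + (24 : ℂ) * e ^ 2 * T⁻¹ ^ 2 * Q ^ 2 + (36 : ℂ) * e ^ 2 * T⁻¹ ^ 2 * (e * e - 1)⁻¹ * Q ^ 2 + (-4 : ℂ) * e ^ 2 * e⁻¹ ^ 2 * T⁻¹ * (e * e - 1)⁻¹ * Q * Complex.I + (-12 : ℂ) * e ^ 2 * e⁻¹ ^ 2 * T⁻¹ ^ 2 * Q ^ 2 + (-14 : ℂ) * e ^ 2 * e⁻¹ ^ 2 * T⁻¹ ^ 2 * (e * e - 1)⁻¹ * Q ^ 2 + (2 : ℂ) * e ^ 2 * e⁻¹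 ^ 4 * T⁻¹ ^ 2 * (e * e - 1)⁻¹ * Q ^ 2 + (-2 : ℂ) * e ^ 3 * e⁻¹ * (e * e - 1)⁻¹ + (16 : ℂ) * e ^ 3 * e⁻¹ * T⁻¹ * Q * Complex.I + (20 : ℂ) * e ^ 3 * e⁻¹ * T⁻¹ * (e * e - 1)⁻¹ * Q * Complex.I + (24 : ℂ) * e ^ 3 * e⁻¹ * T⁻¹ ^ 2 * Q ^ 2 + (36 : ℂ) * e ^ 3 * e⁻¹ * T⁻¹ ^ 2 * (e * e - 1)⁻¹ * Q ^ 2 + (-4 : ℂ) * e ^ 3 * e⁻¹ ^ 3 * T⁻¹ * (e * e - 1)⁻¹ * Q * Complex.I + (-12 : ℂ) * e ^ 3 * e⁻¹ ^ 3 * T⁻¹ ^ 2 * Q ^ 2 + (-14 : ℂ) * e ^ 3 * e⁻¹ ^ 3 * T⁻¹ ^ 2 * (e * e - 1)⁻¹ * Q ^ 2 + (2 : ℂ) * e ^ 3 * e⁻¹ ^ 5 * T⁻¹ ^ 2 * (e * e - 1)⁻¹ * Q ^ 2 + (6 : ℂ) * e ^ 4 * (e * e - 1)⁻¹ + (-12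 : ℂ) * e ^ 4 * T⁻¹ * Q * Complex.I + (-28 : ℂ) * e ^ 4 * T⁻¹ * (e * e - 1)⁻¹ * Q * Complex.I + (-20 : ℂ) * e ^ 4 * T⁻¹ ^ 2 * Q ^ 2 + (-44 : ℂ) * e ^ 4 * T⁻¹ ^ 2 * (e * e - 1)⁻¹ * Q ^ 2 + (20 : ℂ) * e ^ 4 * e⁻¹ ^ 2 * T⁻¹ * (e * e - 1)⁻¹ * Q * Complex.I + (24 : ℂ) * e ^ 4 * e⁻¹ ^ 2 * T⁻¹ ^ 2 * Q ^ 2 + (36 : ℂ) * e ^ 4 * e⁻¹ ^ 2 * T⁻¹ ^ 2 * (e * e - 1)⁻¹ * Q ^ 2 + (-14 : ℂ) * e ^ 4 * e⁻¹ ^ 4 * T⁻¹ ^ 2 * (e * e - 1)⁻¹ * Q ^ 2 + (6 : ℂ) * e ^ 5 * e⁻¹ * (e * e - 1)⁻¹ + (-12 : ℂ) * e ^ 5 * e⁻¹ * T⁻¹ * Q * Complex.I + (-28 : ℂ) * e ^ 5 * e⁻¹ * T⁻¹ * (e * e - 1)⁻¹ * Q * Complex.I + (-20 : ℂ) * e ^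 5 * e⁻¹ * T⁻¹ ^ 2 * Q ^ 2 + (-44 : ℂ) * e ^ 5 * e⁻¹ * T⁻¹ ^ 2 * (e * e - 1)⁻¹ * Q ^ 2 + (20 : ℂ) * e ^ 5 * e⁻¹ ^ 3 * T⁻¹ * (e * e - 1)⁻¹ * Q * Complex.I + (24 : ℂ) * e ^ 5 * e⁻¹ ^ 3 * T⁻¹ ^ 2 * Q ^ 2 + (36 : ℂ) * e ^ 5 * e⁻¹ ^ 3 * T⁻¹ ^ 2 * (e * e - 1)⁻¹ * Q ^ 2 + (-14 : ℂ) * e ^ 5 * e⁻¹ ^ 5 * T⁻¹ ^ 2 * (e * e - 1)⁻¹ * Q ^ 2 + (12 : ℂ) * e ^ 6 * T⁻¹ * (e * e - 1)⁻¹ * Q * Complex.I + (6 : ℂ) * e ^ 6 * T⁻¹ ^ 2 * Q ^ 2 + (26 : ℂ) * e ^ 6 * T⁻¹ ^ 2 * (e * e - 1)⁻¹ * Q ^ 2 + (-28 : ℂ) * e ^ 6 * e⁻¹ ^ 2 * T⁻¹ * (e * e - 1)⁻¹ * Q * Complex.I + (-20 : ℂ) * e ^ 6 * e⁻¹ ^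 2 * T⁻¹ ^ 2 * Q ^ 2 + (-44 : ℂ) * e ^ 6 * e⁻¹ ^ 2 * T⁻¹ ^ 2 * (e * e - 1)⁻¹ * Q ^ 2 + (36 : ℂ) * e ^ 6 * e⁻¹ ^ 4 * T⁻¹ ^ 2 * (e * e - 1)⁻¹ * Q ^ 2 + (12 : ℂ) * e ^ 7 * e⁻¹ * T⁻¹ * (e * e - 1)⁻¹ * Q * Complex.I + (6 : ℂ) * e ^ 7 * e⁻¹ * T⁻¹ ^ 2 * Q ^ 2 + (26 : ℂ) * e ^ 7 * e⁻¹ * T⁻¹ ^ 2 * (e * e - 1)⁻¹ * Q ^ 2 + (-28 : ℂ) * e ^ 7 * e⁻¹ ^ 3 * T⁻¹ * (e * e - 1)⁻¹ * Q * Complex.I + (-20 : ℂ) * e ^ 7 * e⁻¹ ^ 3 * T⁻¹ ^ 2 * Q ^ 2 + (-44 : ℂ) * e ^ 7 * e⁻¹ ^ 3 * T⁻¹ ^ 2 * (e * e - 1)⁻¹ * Q ^ 2 + (36 : ℂ) * e ^ 7 * e⁻¹ ^ 5 * T⁻¹ ^ 2 * (e * e - 1)⁻¹ * Q ^ 2 +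 (-6 : ℂ) * e ^ 8 * T⁻¹ ^ 2 * (e * e - 1)⁻¹ * Q ^ 2 + (12 : ℂ) * e ^ 8 * e⁻¹ ^ 2 * T⁻¹ * (e * e - 1)⁻¹ * Q * Complex.I + (6 : ℂ) * e ^ 8 * e⁻¹ ^ 2 * T⁻¹ ^ 2 * Q ^ 2 + (26 : ℂ) * e ^ 8 * e⁻¹ ^ 2 * T⁻¹ ^ 2 * (e * e - 1)⁻¹ * Q ^ 2 + (-44 : ℂ) * e ^ 8 * e⁻¹ ^ 4 * T⁻¹ ^ 2 * (e * e - 1)⁻¹ * Q ^ 2 + (-6 : ℂ) * e ^ 9 * e⁻¹ * T⁻¹ ^ 2 * (e * e - 1)⁻¹ * Q ^ 2 + (12 : ℂ) * e ^ 9 * e⁻¹ ^ 3 * T⁻¹ * (e * e - 1)⁻¹ * Q * Complex.I + (6 : ℂ) * e ^ 9 * e⁻¹ ^ 3 * T⁻¹ ^ 2 * Q ^ 2 + (26 : ℂ) * e ^ 9 * e⁻¹ ^ 3 * T⁻¹ ^ 2 * (e * e - 1)⁻¹ * Q ^ 2 + (-44 : ℂ) * e ^ 9 * e⁻¹ ^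 5 * T⁻¹ ^ 2 * (e * e - 1)⁻¹ * Q ^ 2 + (-6 : ℂ) * e ^ 10 * e⁻¹ ^ 2 * T⁻¹ ^ 2 * (e * e - 1)⁻¹ * Q ^ 2 + (26 : ℂ) * e ^ 10 * e⁻¹ ^ 4 * T⁻¹ ^ 2 * (e * e - 1)⁻¹ * Q ^ 2 + (-6 : ℂ) * e ^ 11 * e⁻¹ ^ 3 * T⁻¹ ^ 2 * (e * e - 1)⁻¹ * Q ^ 2 + (26 : ℂ) * e ^ 11 * e⁻¹ ^ 5 * T⁻¹ ^ 2 * (e * e - 1)⁻¹ * Q ^ 2 + (-6 : ℂ) * e ^ 12 * e⁻¹ ^ 4 * T⁻¹ ^ 2 * (e * e - 1)⁻¹ * Q ^ 2 + (-6 : ℂ) * e ^ 13 * e⁻¹ ^ 5 * T⁻¹ ^ 2 * (e * e - 1)⁻¹ * Q ^ 2) * hf + ((4 : ℂ) * T⁻¹ * Q * Complex.I + (12 : ℂ) * T⁻¹ ^ 2 * Q ^ 2 + (-2 : ℂ) * e⁻¹ ^ 2 * T⁻¹ ^ 2 * Q ^ 2 + (4 : ℂ) * e ^ 2 + (-16 :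 ℂ) * e ^ 2 * T⁻¹ * Q * Complex.I + (-24 : ℂ) * e ^ 2 * T⁻¹ ^ 2 * Q ^ 2 + (12 : ℂ) * e ^ 4 * T⁻¹ * Q * Complex.I + (20 : ℂ) * e ^ 4 * T⁻¹ ^ 2 * Q ^ 2 + (-6 : ℂ) * e ^ 6 * T⁻¹ ^ 2 * Q ^ 2) * hw + ((4 : ℂ) * e ^ 2 + (2 : ℂ) * e ^ 4 * e⁻¹ ^ 2 * (e * e - 1)⁻¹ + (-6 : ℂ) * e ^ 6 * e⁻¹ ^ 2 * (e * e - 1)⁻¹) * hI
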